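/- Let M ≥ 1 and λ = (λ0,λ1,λ2) ∈ Λ_{Q,M}. Then the squared modulus of the C-function at the point (1/M, 0) satisfies |Φ_λ(1/M, 0)|² = 4·(2·cos(π(λ1+λ2)/M) + cos(π(λ1−λ2)/M))² + 4·sin²(π(λ1−λ2)/M). -/

import Mathlib

open Finset

/-- The point set `F_{P,M}`: triples of nonnegative integers summing to `M`. -/
def FPM (M : ℕ) : Finset (ℕ × ℕ × ℕ) :=
  (Finset.range (M+1) ×ˢ Finset.range (M+1) ×ˢ Finset.range (M+1)).filter
    (fun s => s.1 + s.2.1 + s.2.2 = M)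

/-- The point set `F_{Q,M}`: triples of `F_{P,M}` with `s1 + 2 s2 ≡ 0 (mod 3)`. -/
def FQM (M : ℕ) : Finset (ℕ × ℕ × ℕ) :=
  (FPM M).filter (fun s => (s.2.1 + 2 * s.2.2) % 3 = 0)

/-- The honeycomb point set `H_M = F_{P,M} \ F_{Q,M}`. -/
def HM (M : ℕ) : Finset (ℕ × ℕ × ℕ) := FPM M \ FQM M

/-- The interior point set `F̃_{P,M}`: triples of strictly positive integers summing to `M`. -/
def FPMint (M : ℕ) : Finset (ℕ × ℕ × ℕ) :=
  (FPM M).filter (fun s => 0 < s.1 ∧ 0 < s.2.1 ∧ 0 < s.2.2)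

/-- The interior point set `F̃_{Q,M}`. -/
def FQMint (M : ℕ) : Finset (ℕ × ℕ × ℕ) :=
  (FPMint M).filter (fun s => (s.2.1 + 2 * s.2.2) % 3 = 0)

/-- The interior honeycomb point set `H̃_M = F̃_{P,M} \ F̃_{Q,M}`. -/
def HMint (M : ℕ) : Finset (ℕ × ℕ × ℕ) := FPMint M \ FQMint M

/-- The weight set `L_M ⊆ Λ_{Q,M}`. -/
def LM (M : ℕ) : Finset (ℕ × ℕ × ℕ) :=
  (FPM M).filter (fun l => (l.2.1 < l.1 ∧ l.2.2 < l.1) ∨ (l.1 = l.2.1 ∧ l.2.2 < l.1))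

/-- The interior weight set `L̃_M`: elements of `L_M` with all coordinates positive. -/
def LMint (M : ℕ) : Finset (ℕ × ℕ × ℕ) :=
  (LM M).filter (fun l => 0 < l.1 ∧ 0 < l.2.1 ∧ 0 < l.2.2)

/-- A triple `s ∈ F_{P,M}` is identified with the point `(s1/M, s2/M)`. -/
noncomputable def pt (M : ℕ) (s : ℕ × ℕ × ℕ) : ℝ × ℝ :=
  ((s.2.1 : ℝ) / M, (s.2.2 : ℝ) / M)

/-- The Weyl group orbit of the weight `λ` (ordered list, in `ω`-coordinates). -/
def orbit (l : ℕ × ℕ × ℕ) : List (ℤ × ℤ) :=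
  [(2*(l.2.1:ℤ)+l.2.2, (l.2.1:ℤ)+2*l.2.2),
   (-(l.2.1:ℤ)+l.2.2, (l.2.1:ℤ)+2*l.2.2),
   (-(l.2.1:ℤ)-2*l.2.2, (l.2.1:ℤ)-l.2.2),
   (-(l.2.1:ℤ)-2*l.2.2, -2*(l.2.1:ℤ)-l.2.2),
   (-(l.2.1:ℤ)+l.2.2, -2*(l.2.1:ℤ)-l.2.2),
   (2*(l.2.1:ℤ)+l.2.2, (l.2.1:ℤ)-l.2.2)]

/-- The signs `(+,−,+,−,+,−)` attached to the six orbit points for `S`-functions. -/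
def orbitSigns : List ℤ := [1, -1, 1, -1, 1, -1]

/-- The Weyl orbit `C`-function `Φ_λ` of `A₂`. -/
noncomputable def PhiC (l : ℕ × ℕ × ℕ) (x : ℝ × ℝ) : ℂ :=
  ((orbit l).map (fun p =>
    Complex.exp (2 * Real.pi * Complex.I / 3 * ((p.1 : ℂ) * (x.1 : ℂ) + (p.2 : ℂ) * (x.2 : ℂ))))).sum

/-- The Weyl orbit `S`-function `φ_λ` of `A₂`. -/
noncomputable def PhiS (l : ℕ × ℕ × ℕ) (x : ℝ × ℝ) : ℂ :=
  ((orbitSigns.zip (orbit l)).map (fun p => (p.1 : ℂ) *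
    Complex.exp (2 * Real.pi * Complex.I / 3 * ((p.2.1 : ℂ) * (x.1 : ℂ) + (p.2.2 : ℂ) * (x.2 : ℂ))))).sum

/-- The Hartley kernel `cas t = cos t + sin t`. -/
noncomputable def cas (t : ℝ) : ℝ := Real.cos t + Real.sin t

/-- The Hartley `C`-function `ζ¹_λ` of `A₂`. -/
noncomputable def zetaC (l : ℕ × ℕ × ℕ) (x : ℝ × ℝ) : ℝ :=
  ((orbit l).map (fun p => cas (2 * Real.pi / 3 * ((p.1 : ℝ) * x.1 + (p.2 : ℝ) * x.2)))).sum

/-- The Hartley `S`-function `ζ^e_λ` of `A₂`. -/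
noncomputable def zetaS (l : ℕ × ℕ × ℕ) (x : ℝ × ℝ) : ℝ :=
  ((orbitSigns.zip (orbit l)).map (fun p => (p.1 : ℝ) *
    cas (2 * Real.pi / 3 * ((p.2.1 : ℝ) * x.1 + (p.2.2 : ℝ) * x.2)))).sum

/-- The number of zero entries of a triple. -/
def zeroCount (s : ℕ × ℕ × ℕ) : ℕ :=
  (if s.1 = 0 then 1 else 0) + (if s.2.1 = 0 then 1 else 0) + (if s.2.2 = 0 then 1 else 0)

/-- The discrete function `ε`: values `6, 3, 1` for zero, one, two zero entries. -/
def epsF (s : ℕ × ℕ × ℕ) : ℕ :=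
  if zeroCount s = 0 then 6 else if zeroCount s = 1 then 3 else 1

/-- The discrete function `h_M`: values `1, 2, 6` for zero, one, two zero entries. -/
def hMF (l : ℕ × ℕ × ℕ) : ℕ :=
  if zeroCount l = 0 then 1 else if zeroCount l = 1 then 2 else 6

/-- The elements `γ₀ = id`, `γ₁`, `γ₂` of `Γ_M` acting as cyclic permutations of Kac
coordinates: `γ₁[λ0,λ1,λ2] = [λ2,λ0,λ1]`, `γ₂[λ0,λ1,λ2] = [λ1,λ2,λ0]`. -/
def gam (k : Fin 3) (l : ℕ × ℕ × ℕ) : ℕ × ℕ × ℕ :=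
  if k = 0 then l else if k = 1 then (l.2.2, l.1, l.2.1) else (l.2.1, l.2.2, l.1)

/-- The normalization function `μ` of a triple of extension coefficients. -/
noncomputable def muNorm (a b c : ℂ) : ℝ :=
  ‖a‖ ^ 2 + ‖b‖ ^ 2 + ‖c‖ ^ 2
    - (a * starRingEnd ℂ b + a * starRingEnd ℂ c + b * starRingEnd ℂ c).re

/-- The intertwining function `β` of two triples of extension coefficients. -/
noncomputable def betaFun (a b c a' b' c' : ℂ) : ℂ :=
  2 * (a * starRingEnd ℂ a' + b * starRingEnd ℂ b' + c * starRingEnd ℂ c')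
    - a * (starRingEnd ℂ b' + starRingEnd ℂ c')
    - b * (starRingEnd ℂ a' + starRingEnd ℂ c')
    - c * (starRingEnd ℂ a' + starRingEnd ℂ b')

/-- The extended `C`-function `Φ^t_λ` with extension coefficients `μ0, μ1, μ2`. -/
noncomputable def PhiCExt (μ0 μ1 μ2 : ℂ) (l : ℕ × ℕ × ℕ) (x : ℝ × ℝ) : ℂ :=
  μ0 * PhiC l x + μ1 * PhiC (gam 1 l) x + μ2 * PhiC (gam 2 l) x

/-- The extended `S`-function `φ^t_λ` with extension coefficients `μ0, μ1, μ2`. -/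
noncomputable def PhiSExt (μ0 μ1 μ2 : ℂ) (l : ℕ × ℕ × ℕ) (x : ℝ × ℝ) : ℂ :=
  μ0 * PhiS l x + μ1 * PhiS (gam 1 l) x + μ2 * PhiS (gam 2 l) x

/-- The extended Hartley `C`-function `ζ^{1,t}_λ` with extension coefficients `μ0, μ1, μ2`. -/
noncomputable def zetaCExt (μ0 μ1 μ2 : ℂ) (l : ℕ × ℕ × ℕ) (x : ℝ × ℝ) : ℂ :=
  μ0 * (zetaC l x : ℂ) + μ1 * (zetaC (gam 1 l) x : ℂ) + μ2 * (zetaC (gam 2 l) x : ℂ)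

/-- The extended Hartley `S`-function `ζ^{e,t}_λ` with extension coefficients `μ0, μ1, μ2`. -/
noncomputable def zetaSExt (μ0 μ1 μ2 : ℂ) (l : ℕ × ℕ × ℕ) (x : ℝ × ℝ) : ℂ :=
  μ0 * (zetaS l x : ℂ) + μ1 * (zetaS (gam 1 l) x : ℂ) + μ2 * (zetaS (gam 2 l) x : ℂ)

/-- the squared modulus of the `C`-function `Φ_λ` at the point `(1/M, 0)`. -/
theorem abs_sq_PhiC_at_omega1 (M : ℕ) (hM : 1 ≤ M)
    (lam : ℕ × ℕ × ℕ) (hl : lam ∈ FPM M) :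
    ‖PhiC lam ((1 : ℝ) / M, 0)‖ ^ 2 =
      4 * (2 * Real.cos (Real.pi * ((lam.2.1 : ℝ) + lam.2.2) / M) +
             Real.cos (Real.pi * ((lam.2.1 : ℝ) - lam.2.2) / M)) ^ 2 +
        4 * Real.sin (Real.pi * ((lam.2.1 : ℝ) - lam.2.2) / M) ^ 2 := by
  have hM0 : (M : ℝ) ≠ 0 := Nat.cast_ne_zero.mpr (by omega)


  set tA : ℝ := 2 * Real.pi * (2 * (lam.2.1 : ℝ) + (lam.2.2 : ℝ)) / (3 * M) with htA
  set tB : ℝ := 2 * Real.pi * (-(lam.2.1 : ℝ) + (lam.2.2 : ℝ)) / (3 * M) with htB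
  set tC : ℝ := 2 * Real.pi * (-(lam.2.1 : ℝ) - 2 * (lam.2.2 : ℝ)) / (3 * M) with htC
  have term : ∀ p : ℤ × ℤ,
      Complex.exp (2 * (Real.pi : ℂ) * Complex.I / 3 *
        ((p.1 : ℂ) * (((1 : ℝ) / M : ℝ) : ℂ) + (p.2 : ℂ) * ((0 : ℝ) : ℂ))) =
      Complex.exp (((2 * Real.pi * (p.1 : ℝ) / (3 * M) : ℝ) : ℂ) * Complex.I) := by
    intro p; congr 1; push_cast; ring
  have h1 : PhiC lam ((1 : ℝ) / M, 0) =
      Complex.exp ((tA : ℂ) * Complex.I) + Complex.exp ((tB : ℂ) * Complex.I) +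
      Complex.exp ((tC : ℂ) * Complex.I) + Complex.exp ((tC : ℂ) * Complex.I) +
      Complex.exp ((tB : ℂ) * Complex.I) + Complex.exp ((tA : ℂ) * Complex.I) := by
    simp only [PhiC, orbit, List.map_cons, List.map_nil, List.sum_cons, List.sum_nil, add_zero]
    rw [term (2*(lam.2.1:ℤ)+lam.2.2, (lam.2.1:ℤ)+2*lam.2.2),
        term (-(lam.2.1:ℤ)+lam.2.2, (lam.2.1:ℤ)+2*lam.2.2),
        term (-(lam.2.1:ℤ)-2*lam.2.2, (lam.2.1:ℤ)-lam.2.2),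
        term (-(lam.2.1:ℤ)-2*lam.2.2, -2*(lam.2.1:ℤ)-lam.2.2),
        term (-(lam.2.1:ℤ)+lam.2.2, -2*(lam.2.1:ℤ)-lam.2.2),
        term (2*(lam.2.1:ℤ)+lam.2.2, (lam.2.1:ℤ)-lam.2.2)]
    push_cast
    rw [htA, htB, htC]
    push_cast
    ring_nf
  rw [h1, Complex.sq_norm, Complex.normSq_apply]
  simp only [Complex.add_re, Complex.add_im, Complex.exp_ofReal_mul_I_re,
    Complex.exp_ofReal_mul_I_im]
  set u : ℝ := Real.pi * ((lam.2.1 : ℝ) + (lam.2.2 : ℝ)) / M with hu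
  set v : ℝ := Real.pi * ((lam.2.1 : ℝ) - (lam.2.2 : ℝ)) / M with hv
  have key : (Real.cos tA + Real.cos tB + Real.cos tC) ^ 2 +
      (Real.sin tA + Real.sin tB + Real.sin tC) ^ 2 =
      3 + 2 * Real.cos (tA - tB) + 2 * Real.cos (tA - tC) + 2 * Real.cos (tB - tC) := by
    rw [Real.cos_sub, Real.cos_sub, Real.cos_sub]
    linear_combination Real.sin_sq_add_cos_sq tA + Real.sin_sq_add_cos_sq tB +
      Real.sin_sq_add_cos_sq tC
  have hab : tA - tB = u + v := by rw [htA, htB, hu, hv]; field_simp; ring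
  have hac : tA - tC = 2 * u := by rw [htA, htC, hu]; field_simp; ring
  have hbc : tB - tC = u - v := by rw [htB, htC, hu, hv]; field_simp; ring
  rw [hab, hac, hbc, Real.cos_add, Real.cos_two_mul, Real.cos_sub] at key
  linear_combination 4 * key - 4 * Real.sin_sq_add_cos_sq v
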